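/- arXiv:1902.10274 — 2 statements merged into one kernel-verified Lean document; each statement's English description precedes it below -/
import Mathlib

section
/- Let Y = UΣVᵀ be an SVD of Y ∈ ℝ^{m×n}. The minimum over X of ‖Y − X‖_F² + ‖X‖_{Θ,*} equals the minimum over B of ‖Σ − B‖_F² + ‖B‖_{Θ,*}, and if B̂ minimizes the latter then X̂ = UB̂Vᵀ minimizes the former. -/
open Matrix Polynomial

section Aux

lemma charpoly_conj {N : Type*} [DecidableEq N] [Fintype N] {R : Type*} [CommRing R]
    (P M Q : Matrix N N R) (hPQ : P * Q = 1) :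
    (P * M * Q).charpoly = M.charpoly := by
  have hmap : ∀ (A B : Matrix N N R),
      (C : R →+* R[X]).mapMatrix (A * B) =
        (C : R →+* R[X]).mapMatrix A * (C : R →+* R[X]).mapMatrix B := fun A B => by
    simp [_root_.map_mul]
  have key : charmatrix (P * M * Q) =
      (C : R →+* R[X]).mapMatrix P * charmatrix M * (C : R →+* R[X]).mapMatrix Q := by
    unfold charmatrix
    rw [Matrix.mul_sub, Matrix.sub_mul]
    congr 1
    · have h1 : (C : R →+* R[X]).mapMatrix P * Matrix.scalar N (X : R[X]) =
          Matrix.scalar N (X : R[X]) * (C : R →+* R[X]).mapMatrix P :=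
        (scalar_commute (X : R[X]) (Commute.all _) _).symm
      rw [h1, Matrix.mul_assoc, ← hmap, hPQ]
      simp
    · rw [← hmap, ← hmap]
  have hdet1 : ((C : R →+* R[X]).mapMatrix P).det * ((C : R →+* R[X]).mapMatrix Q).det = 1 := by
    rw [← det_mul, ← _root_.map_mul, hPQ]
    simp
  unfold Matrix.charpoly
  rw [key, det_mul, det_mul, mul_comm, ← mul_assoc,
    mul_comm (((C : R →+* R[X]).mapMatrix Q).det), hdet1, one_mul]

lemma charpoly_diag {N : Type*} [DecidableEq N] [Fintype N] {R : Type*} [CommRing R]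
    (d : N → R) : (Matrix.diagonal d).charpoly = ∏ i, (X - C (d i)) := by
  have h : charmatrix (Matrix.diagonal d) = Matrix.diagonal (fun i => X - C (d i)) := by
    ext i j
    by_cases h : i = j
    · subst h; simp [charmatrix_apply, Matrix.diagonal_apply]
    · simp [charmatrix_apply, Matrix.diagonal_apply, h]
  rw [Matrix.charpoly, h, Matrix.det_diagonal]

lemma eig_multiset_eq_roots {N : Type*} [DecidableEq N] [Fintype N]
    {M : Matrix N N ℝ} (hM : M.IsHermitian) :
    Finset.univ.val.map hM.eigenvalues = M.charpoly.roots := by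
  have hst := hM.spectral_theorem
  have h1 : (hM.eigenvectorUnitary : Matrix N N ℝ) *
      (star hM.eigenvectorUnitary : Matrix N N ℝ) = 1 := hM.eigenvectorUnitary.2.2
  have h2 : Matrix.diagonal ((RCLike.ofReal : ℝ → ℝ) ∘ hM.eigenvalues)
      = Matrix.diagonal hM.eigenvalues := by
    rfl
  rw [h2] at hst
  have h3 : M.charpoly = (Matrix.diagonal hM.eigenvalues).charpoly := by
    conv_lhs => rw [hst]
    exact charpoly_conj _ _ _ h1
  rw [h3, charpoly_diag, Finset.prod_eq_multiset_prod]
  rw [show (Multiset.map (fun i => X - C (hM.eigenvalues i)) Finset.univ.val)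
    = Multiset.map (fun a : ℝ => X - C a) (Multiset.map hM.eigenvalues Finset.univ.val) by
      rw [Multiset.map_map]; rfl, roots_multiset_prod_X_sub_C]

lemma sorted_tuple_eq {k : ℕ} {f g : Fin k → ℝ}
    (h : Multiset.map f Finset.univ.val = Multiset.map g Finset.univ.val) :
    f ∘ Tuple.sort f = g ∘ Tuple.sort g := by
  have hofn : ∀ u : Fin k → ℝ,
      (↑(List.ofFn u) : Multiset ℝ) = Multiset.map u Finset.univ.val := by
    intro u
    simp [List.ofFn_eq_map]
  have hperm : (List.ofFn f).Perm (List.ofFn g) := by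
    rw [← Multiset.coe_eq_coe, hofn, hofn, h]
  have h1 : (List.ofFn (f ∘ Tuple.sort f)).Perm (List.ofFn (g ∘ Tuple.sort g)) :=
    ((Tuple.sort f).ofFn_comp_perm f).trans (hperm.trans ((Tuple.sort g).ofFn_comp_perm g).symm)
  exact List.ofFn_injective <| h1.eq_of_pairwise'
    (Tuple.monotone_sort f).sortedLE_ofFn.pairwise (Tuple.monotone_sort g).sortedLE_ofFn.pairwise

end Aux

/-- Singular values of a real matrix, in non-increasing order, indexed by column
index (padded with zeros). -/
noncomputable def singularValue {m n : ℕ} (X : Matrix (Fin m) (Fin n) ℝ) (i : Fin n) : ℝ :=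
  let g : Fin n → ℝ := fun j =>
    Real.sqrt ((Matrix.isHermitian_conjTranspose_mul_self X).eigenvalues j)
  g (Tuple.sort g (Fin.rev i))

/-- Weighted nuclear norm. -/
noncomputable def weightedNuclearNorm {m n : ℕ} (Θ : Fin n → ℝ)
    (X : Matrix (Fin m) (Fin n) ℝ) : ℝ :=
  ∑ j, Θ j * singularValue X j

lemma singularValue_conj {m n : ℕ} (U : Matrix (Fin m) (Fin m) ℝ)
    (V : Matrix (Fin n) (Fin n) ℝ) (A : Matrix (Fin m) (Fin n) ℝ)
    (hU' : Uᵀ * U = 1) (hV : V * Vᵀ = 1) :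
    singularValue (U * A * Vᵀ) = singularValue A := by
  have heq : (U * A * Vᵀ)ᴴ * (U * A * Vᵀ) = V * (Aᴴ * A) * Vᵀ := by
    rw [Matrix.conjTranspose_eq_transpose_of_trivial,
      Matrix.conjTranspose_eq_transpose_of_trivial,
      Matrix.transpose_mul, Matrix.transpose_mul, Matrix.transpose_transpose]
    calc V * (Aᵀ * Uᵀ) * (U * A * Vᵀ)
        = V * (Aᵀ * ((Uᵀ * U) * (A * Vᵀ))) := by
          simp only [Matrix.mul_assoc]
      _ = V * (Aᵀ * A) * Vᵀ := by rw [hU']; simp only [Matrix.one_mul, Matrix.mul_assoc]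
  have hcp : ((U * A * Vᵀ)ᴴ * (U * A * Vᵀ)).charpoly = (Aᴴ * A).charpoly := by
    rw [heq]; exact charpoly_conj _ _ _ hV
  have hms : Multiset.map (Matrix.isHermitian_conjTranspose_mul_self (U * A * Vᵀ)).eigenvalues
      Finset.univ.val = Multiset.map (Matrix.isHermitian_conjTranspose_mul_self A).eigenvalues
      Finset.univ.val := by
    rw [eig_multiset_eq_roots, eig_multiset_eq_roots, hcp]
  funext i
  show (fun j => Real.sqrt ((Matrix.isHermitian_conjTranspose_mul_self (U * A * Vᵀ)).eigenvalues j))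
      (Tuple.sort _ (Fin.rev i)) = _
  have hms2 : Multiset.map
      (fun j => Real.sqrt ((Matrix.isHermitian_conjTranspose_mul_self (U * A * Vᵀ)).eigenvalues j))
      Finset.univ.val
      = Multiset.map
      (fun j => Real.sqrt ((Matrix.isHermitian_conjTranspose_mul_self A).eigenvalues j))
      Finset.univ.val := by
    have := congrArg (Multiset.map Real.sqrt) hms
    rwa [Multiset.map_map, Multiset.map_map] at this
  exact congrFun (sorted_tuple_eq hms2) (Fin.rev i)

lemma frobenius_conj {m n : ℕ} (U : Matrix (Fin m) (Fin m) ℝ)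
    (V : Matrix (Fin n) (Fin n) ℝ) (A : Matrix (Fin m) (Fin n) ℝ)
    (hU' : Uᵀ * U = 1) (hV' : Vᵀ * V = 1) :
    (∑ i, ∑ j, ((U * A * Vᵀ) i j) ^ 2) = ∑ i, ∑ j, (A i j) ^ 2 := by
  have t : ∀ (k l : ℕ) (M : Matrix (Fin k) (Fin l) ℝ),
      Matrix.trace (M * Mᵀ) = ∑ i, ∑ j, (M i j) ^ 2 := by
    intro k l M
    simp [Matrix.trace, Matrix.mul_apply, Matrix.diag, sq]
  rw [← t, ← t]
  have h1 : (U * A * Vᵀ) * (U * A * Vᵀ)ᵀ = U * (A * Aᵀ) * Uᵀ := by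
    rw [Matrix.transpose_mul, Matrix.transpose_mul, Matrix.transpose_transpose]
    calc U * A * Vᵀ * (V * (Aᵀ * Uᵀ))
        = U * (A * ((Vᵀ * V) * (Aᵀ * Uᵀ))) := by simp only [Matrix.mul_assoc]
      _ = U * (A * Aᵀ) * Uᵀ := by rw [hV']; simp only [Matrix.one_mul, Matrix.mul_assoc]
  rw [h1, Matrix.trace_mul_comm, ← Matrix.mul_assoc, ← Matrix.mul_assoc, hU', Matrix.one_mul]

theorem wnn_prox_reduces_to_diagonal {m n : ℕ}
    (Y : Matrix (Fin m) (Fin n) ℝ)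
    (U : Matrix (Fin m) (Fin m) ℝ) (V : Matrix (Fin n) (Fin n) ℝ)
    (hU : U * Uᵀ = 1) (hU' : Uᵀ * U = 1) (hV : V * Vᵀ = 1) (hV' : Vᵀ * V = 1)
    (Sig : Matrix (Fin m) (Fin n) ℝ)
    (hSig : Sig = Matrix.of fun (i : Fin m) (j : Fin n) =>
        if (i : ℕ) = (j : ℕ) then singularValue Y j else 0)
    (hY : Y = U * Sig * Vᵀ)
    (Θ : Fin n → ℝ) (hΘ0 : ∀ i, 0 ≤ Θ i) :
    (sInf (Set.range fun X : Matrix (Fin m) (Fin n) ℝ =>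
        (∑ i, ∑ j, ((Y - X) i j) ^ 2) + weightedNuclearNorm Θ X)
      = sInf (Set.range fun B : Matrix (Fin m) (Fin n) ℝ =>
        (∑ i, ∑ j, ((Sig - B) i j) ^ 2) + weightedNuclearNorm Θ B)) ∧
    ∀ Bhat : Matrix (Fin m) (Fin n) ℝ,
      (∀ B, (∑ i, ∑ j, ((Sig - Bhat) i j) ^ 2) + weightedNuclearNorm Θ Bhat
          ≤ (∑ i, ∑ j, ((Sig - B) i j) ^ 2) + weightedNuclearNorm Θ B) →
      ∀ X, (∑ i, ∑ j, ((Y - U * Bhat * Vᵀ) i j) ^ 2) + weightedNuclearNorm Θ (U * Bhat * Vᵀ)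
          ≤ (∑ i, ∑ j, ((Y - X) i j) ^ 2) + weightedNuclearNorm Θ X := by
  set F : Matrix (Fin m) (Fin n) ℝ → ℝ := fun X =>
    (∑ i, ∑ j, ((Y - X) i j) ^ 2) + weightedNuclearNorm Θ X with hF
  set G : Matrix (Fin m) (Fin n) ℝ → ℝ := fun B =>
    (∑ i, ∑ j, ((Sig - B) i j) ^ 2) + weightedNuclearNorm Θ B with hG
  have hwnn : ∀ B : Matrix (Fin m) (Fin n) ℝ,
      weightedNuclearNorm Θ (U * B * Vᵀ) = weightedNuclearNorm Θ B := by
    intro B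
    unfold weightedNuclearNorm
    rw [singularValue_conj U V B hU' hV]
  have hrec : ∀ X : Matrix (Fin m) (Fin n) ℝ, U * (Uᵀ * X * V) * Vᵀ = X := by
    intro X
    calc U * (Uᵀ * X * V) * Vᵀ = U * (Uᵀ * (X * (V * Vᵀ))) := by simp only [Matrix.mul_assoc]
      _ = U * Uᵀ * X := by rw [hV, Matrix.mul_one, Matrix.mul_assoc]
      _ = X := by rw [hU, Matrix.one_mul]
  have key : ∀ X : Matrix (Fin m) (Fin n) ℝ, F X = G (Uᵀ * X * V) := by
    intro X
    have h1 : Y - X = U * (Sig - Uᵀ * X * V) * Vᵀ := by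
      rw [Matrix.mul_sub, Matrix.sub_mul, hrec, hY]
    have h2 : X = U * (Uᵀ * X * V) * Vᵀ := (hrec X).symm
    rw [hF, hG]
    simp only
    rw [h1, frobenius_conj U V _ hU' hV']
    congr 1
    conv_lhs => rw [h2]
    exact hwnn _
  have key2 : ∀ B : Matrix (Fin m) (Fin n) ℝ, F (U * B * Vᵀ) = G B := by
    intro B
    have hrec2 : Uᵀ * (U * B * Vᵀ) * V = B := by
      calc Uᵀ * (U * B * Vᵀ) * V = Uᵀ * (U * (B * (Vᵀ * V))) := by simp only [Matrix.mul_assoc]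
        _ = Uᵀ * U * B := by rw [hV', Matrix.mul_one, Matrix.mul_assoc]
        _ = B := by rw [hU', Matrix.one_mul]
    rw [key, hrec2]
  constructor
  · have hrange : Set.range F = Set.range G := by
      ext y
      constructor
      · rintro ⟨X, rfl⟩
        exact ⟨Uᵀ * X * V, (key X).symm⟩
      · rintro ⟨B, rfl⟩
        exact ⟨U * B * Vᵀ, key2 B⟩
    exact congrArg sInf hrange
  · intro Bhat hmin X
    have h1 : F (U * Bhat * Vᵀ) ≤ F X := by
      rw [key2, key X]
      exact hmin _
    exact h1
end

section
/- If S ∈ ℝ^{3F×P} and S♯ ∈ ℝ^{F×3P} is the rearrangement placing, for each frame f, the three rows (X, Y, Z coordinates) of frame f side by side as a single row, then rank(S) ≤ 3·rank(S♯). -/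
open Matrix

lemma matrix_rank_add_le {m n : Type*} [Fintype m] [Fintype n] [DecidableEq n]
    (A B : Matrix m n ℝ) : (A + B).rank ≤ A.rank + B.rank := by
  simp only [Matrix.rank]
  have h : LinearMap.range (A + B).mulVecLin ≤
      LinearMap.range A.mulVecLin ⊔ LinearMap.range B.mulVecLin := by
    rintro x ⟨v, rfl⟩
    exact Submodule.mem_sup.mpr ⟨A.mulVec v, ⟨v, rfl⟩, B.mulVec v, ⟨v, rfl⟩, by
      simp [Matrix.add_mulVec]⟩
  calc Module.finrank ℝ (LinearMap.range (A + B).mulVecLin)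
      ≤ Module.finrank ℝ ↥(LinearMap.range A.mulVecLin ⊔ LinearMap.range B.mulVecLin) :=
        Submodule.finrank_mono h
    _ ≤ _ := Submodule.finrank_add_le_finrank_add_finrank _ _

theorem rank_rearranged_shape {F P : ℕ}
    (S : Matrix (Fin F × Fin 3) (Fin P) ℝ)
    (Ssharp : Matrix (Fin F) (Fin 3 × Fin P) ℝ)
    (hrearr : ∀ (f : Fin F) (c : Fin 3) (p : Fin P), Ssharp f (c, p) = S (f, c) p) :
    S.rank ≤ 3 * Ssharp.rank := by
  -- factor S = ∑ c, Q c * Ssharp * R c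
  set Q : Fin 3 → Matrix (Fin F × Fin 3) (Fin F) ℝ :=
    fun c => fun fc f' => if fc.2 = c ∧ fc.1 = f' then 1 else 0 with hQ
  set R : Fin 3 → Matrix (Fin 3 × Fin P) (Fin P) ℝ :=
    fun c => fun cp p => if cp.1 = c ∧ cp.2 = p then 1 else 0 with hR
  have hS : S = ∑ c : Fin 3, Q c * Ssharp * R c := by
    ext ⟨f, c⟩ p
    simp only [Finset.sum_apply, Matrix.sum_apply, Matrix.mul_apply]
    simp only [hQ, hR]
    rw [Fin.sum_univ_three]
    have key : ∀ c' : Fin 3,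
        (∑ j : Fin 3 × Fin P, (∑ k : Fin F, (if c = c' ∧ f = k then (1:ℝ) else 0) * Ssharp k j)
          * (if j.1 = c' ∧ j.2 = p then 1 else 0))
        = if c = c' then S (f, c') p else 0 := by
      intro c'
      rw [Finset.sum_eq_single (c', p)]
      · simp only [ite_true, and_true]
        rw [Finset.sum_eq_single f]
        · by_cases h : c = c' <;> simp [h, hrearr]
        · intro k _ hk; simp [Ne.symm hk]
        · simp
      · rintro ⟨c'', p''⟩ _ hne
        by_cases h1 : c'' = c' <;> by_cases h2 : p'' = p <;>
          simp_all
      · simp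
    rw [key 0, key 1, key 2]
    fin_cases c <;> simp
  rw [hS]
  have hterm : ∀ c : Fin 3, (Q c * Ssharp * R c).rank ≤ Ssharp.rank := fun c =>
    le_trans (Matrix.rank_mul_le_left _ _) (Matrix.rank_mul_le_right _ _)
  rw [Fin.sum_univ_three]
  calc (Q 0 * Ssharp * R 0 + Q 1 * Ssharp * R 1 + Q 2 * Ssharp * R 2).rank
      ≤ (Q 0 * Ssharp * R 0 + Q 1 * Ssharp * R 1).rank + (Q 2 * Ssharp * R 2).rank :=
        matrix_rank_add_le _ _
    _ ≤ (Q 0 * Ssharp * R 0).rank + (Q 1 * Ssharp * R 1).rank + (Q 2 * Ssharp * R 2).rank :=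
        add_le_add (matrix_rank_add_le _ _) le_rfl
    _ ≤ Ssharp.rank + Ssharp.rank + Ssharp.rank :=
        add_le_add (add_le_add (hterm 0) (hterm 1)) (hterm 2)
    _ = 3 * Ssharp.rank := by ring
end
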